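/- arXiv:1408.6162 — 2 statements merged into one kernel-verified Lean document; each statement's English description precedes it below -/
import Mathlib

section
/- Let A be a self-adjoint tridiagonal operator on ℓ²(ℕ₀) (with respect to the standard basis (e_n)), with matrix entries a_{n,m} = ⟨A e_m, e_n⟩ vanishing for |n−m| > 1. If a_{n,n} > 0 for all n and a_{n,n} a_{n+1,n+1} − 4 |a_{n,n+1}|² > 0 for all n, then ⟨A ξ, ξ⟩ ≥ 0 for all ξ in the linear span of the basis vectors. -/
open scoped ComplexOrder
open Finset

noncomputable section

def Qf (A : ℕ → ℕ → ℂ) (ξ : ℕ →₀ ℂ) : ℂ :=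
  ∑ a ∈ ξ.support, ∑ b ∈ ξ.support, (starRingEnd ℂ) (ξ a) * A a b * ξ b

/-- Decomposition of a tridiagonal double sum into diagonal and off-diagonal parts. -/
lemma tridiag_sum_decomp (f : ℕ → ℕ → ℂ)
    (hf : ∀ a b, (1 < a - b ∨ 1 < b - a) → f a b = 0) (N : ℕ) :
    ∑ a ∈ range N, ∑ b ∈ range N, f a b
      = ∑ a ∈ range N, f a a + ∑ a ∈ range (N-1), f a (a+1)
        + ∑ a ∈ range (N-1), f (a+1) a := by
  induction N with
  | zero => simp
  | succ N ih =>
    rcases Nat.eq_zero_or_pos N with h0 | hpos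
    · subst h0; simp
    · obtain ⟨n, rfl⟩ : ∃ n, N = n + 1 := ⟨N - 1, by omega⟩
      have h1 : ∑ a ∈ range (n+1), f a (n+1) = f n (n+1) := by
        refine Finset.sum_eq_single_of_mem n (by simp) fun b hb hbn => ?_
        exact hf b (n+1) (Or.inr (by simp at hb; omega))
      have h2 : ∑ b ∈ range (n+1), f (n+1) b = f (n+1) n := by
        refine Finset.sum_eq_single_of_mem n (by simp) fun b hb hbn => ?_
        exact hf (n+1) b (Or.inl (by simp at hb; omega))
      have hinner : ∀ a, ∑ b ∈ range (n+2), f a b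
          = ∑ b ∈ range (n+1), f a b + f a (n+1) := fun a => Finset.sum_range_succ _ _
      rw [Finset.sum_range_succ (fun a => ∑ b ∈ range (n+2), f a b)]
      simp only [hinner]
      rw [Finset.sum_add_distrib, ih, h1, h2]
      rw [Finset.sum_range_succ (fun a => f a a) (n+1)]
      have : n + 2 - 1 = n + 1 := rfl
      rw [this]
      rw [Finset.sum_range_succ (fun a => f a (a+1)) n, Finset.sum_range_succ (fun a => f (a+1) a) n]
      simp only [Nat.add_sub_cancel]
      ring

/-- **Positivity criterion for tridiagonal matrices.**
If A is a symmetric tridiagonal matrix with positive diagonal entries such that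
`a_{n,n} a_{n+1,n+1} − 4 |a_{n,n+1}|² > 0` for all n, then ⟨Aξ,ξ⟩ ≥ 0 for all ξ
in the span of the basis vectors. -/
theorem tridiagonal_positivity
    (A : ℕ → ℕ → ℂ)
    (hsym : ∀ n m, A n m = (starRingEnd ℂ) (A m n))
    (htri : ∀ n m : ℕ, (1 < n - m ∨ 1 < m - n) → A n m = 0)
    (hdiag : ∀ n, 0 < (A n n).re)
    (hdet : ∀ n, 4 * ‖A n (n+1)‖ ^ 2 < (A n n).re * (A (n+1) (n+1)).re) :
    ∀ ξ : ℕ →₀ ℂ, 0 ≤ Qf A ξ := by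
  intro ξ
  have hF0 : ∀ a b : ℕ, ξ a = 0 ∨ ξ b = 0 →
      (starRingEnd ℂ) (ξ a) * A a b * ξ b = 0 := by
    rintro a b (h | h) <;> simp [h]
  set M := ξ.support.sup id with hM
  have hsupp : ξ.support ⊆ range (M+1) := fun n hn =>
    mem_range.mpr (Nat.lt_succ_of_le (Finset.le_sup (f := id) hn))
  have hQ : Qf A ξ = ∑ a ∈ range (M+1), ∑ b ∈ range (M+1),
      (starRingEnd ℂ) (ξ a) * A a b * ξ b := by
    unfold Qf
    rw [Finset.sum_subset hsupp (fun a _ ha => by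
      simp [Finsupp.notMem_support_iff.mp ha])]
    refine Finset.sum_congr rfl fun a _ => ?_
    exact Finset.sum_subset hsupp (fun b _ hb => by
      simp [Finsupp.notMem_support_iff.mp hb])
  have hf : ∀ a b, (1 < a - b ∨ 1 < b - a) →
      (starRingEnd ℂ) (ξ a) * A a b * ξ b = 0 := by
    intro a b h; rw [htri a b h]; ring
  have hdecomp := tridiag_sum_decomp _ hf (M+1)
  simp only [Nat.add_sub_cancel] at hdecomp
  rw [hQ, hdecomp]
  -- imaginary part
  have hconjterm : ∀ a b : ℕ, (starRingEnd ℂ) ((starRingEnd ℂ) (ξ a) * A a b * ξ b)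
      = (starRingEnd ℂ) (ξ b) * A b a * ξ a := by
    intro a b
    rw [map_mul, map_mul, Complex.conj_conj, ← hsym b a]
    ring
  -- real part computations
  have hdiagre : ∀ a : ℕ, ((starRingEnd ℂ) (ξ a) * A a a * ξ a).re
      = ‖ξ a‖^2 * (A a a).re := by
    intro a
    have : (starRingEnd ℂ) (ξ a) * A a a * ξ a = ((‖ξ a‖^2 : ℝ) : ℂ) * A a a := by
      push_cast
      rw [← Complex.mul_conj']
      ring
    rw [this, Complex.re_ofReal_mul]
  have hcross : ∀ a : ℕ, -(‖ξ a‖ * ‖A a (a+1)‖ * ‖ξ (a+1)‖) ≤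
      ((starRingEnd ℂ) (ξ a) * A a (a+1) * ξ (a+1)).re := by
    intro a
    have h1 : |((starRingEnd ℂ) (ξ a) * A a (a+1) * ξ (a+1)).re|
        ≤ ‖(starRingEnd ℂ) (ξ a) * A a (a+1) * ξ (a+1)‖ := Complex.abs_re_le_norm _
    have h2 : ‖(starRingEnd ℂ) (ξ a) * A a (a+1) * ξ (a+1)‖
        = ‖ξ a‖ * ‖A a (a+1)‖ * ‖ξ (a+1)‖ := by
      rw [norm_mul, norm_mul, RCLike.norm_conj]
    rw [h2] at h1
    linarith [neg_abs_le (((starRingEnd ℂ) (ξ a) * A a (a+1) * ξ (a+1)).re)]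
  have hcross' : ∀ a : ℕ, -(‖ξ a‖ * ‖A a (a+1)‖ * ‖ξ (a+1)‖) ≤
      ((starRingEnd ℂ) (ξ (a+1)) * A (a+1) a * ξ a).re := by
    intro a
    have h1 : |((starRingEnd ℂ) (ξ (a+1)) * A (a+1) a * ξ a).re|
        ≤ ‖(starRingEnd ℂ) (ξ (a+1)) * A (a+1) a * ξ a‖ := Complex.abs_re_le_norm _
    have h2 : ‖(starRingEnd ℂ) (ξ (a+1)) * A (a+1) a * ξ a‖
        = ‖ξ a‖ * ‖A a (a+1)‖ * ‖ξ (a+1)‖ := by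
      rw [norm_mul, norm_mul, RCLike.norm_conj, hsym (a+1) a, RCLike.norm_conj]
      ring
    rw [h2] at h1
    linarith [neg_abs_le (((starRingEnd ℂ) (ξ (a+1)) * A (a+1) a * ξ a).re)]
  -- amgm bound per cross term
  have hamgm : ∀ a : ℕ, 2 * (‖ξ a‖ * ‖A a (a+1)‖ * ‖ξ (a+1)‖)
      ≤ ((A a a).re * ‖ξ a‖^2 + (A (a+1) (a+1)).re * ‖ξ (a+1)‖^2) / 2 := by
    intro a
    have hda := hdiag a
    have hdb := hdiag (a+1)
    have hd := hdet a
    set sa := Real.sqrt ((A a a).re) with hsa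
    set sb := Real.sqrt ((A (a+1) (a+1)).re) with hsb
    have hsa2 : sa^2 = (A a a).re := Real.sq_sqrt hda.le
    have hsb2 : sb^2 = (A (a+1) (a+1)).re := Real.sq_sqrt hdb.le
    have hsann : 0 ≤ sa := Real.sqrt_nonneg _
    have hsbnn : 0 ≤ sb := Real.sqrt_nonneg _
    have hc : 2 * ‖A a (a+1)‖ ≤ sa * sb := by
      have h4 : (2 * ‖A a (a+1)‖)^2 ≤ (sa * sb)^2 := by nlinarith
      calc 2 * ‖A a (a+1)‖ = Real.sqrt ((2 * ‖A a (a+1)‖)^2) :=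
            (Real.sqrt_sq (by positivity)).symm
        _ ≤ Real.sqrt ((sa * sb)^2) := Real.sqrt_le_sqrt h4
        _ = sa * sb := Real.sqrt_sq (mul_nonneg hsann hsbnn)
    have hxa : (0:ℝ) ≤ ‖ξ a‖ := norm_nonneg _
    have hxb : (0:ℝ) ≤ ‖ξ (a+1)‖ := norm_nonneg _
    nlinarith [sq_nonneg (sa * ‖ξ a‖ - sb * ‖ξ (a+1)‖),
      mul_nonneg hxa hxb, mul_le_mul_of_nonneg_right hc (mul_nonneg hxa hxb)]
  -- put it all together
  rw [Complex.le_def]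
  constructor
  · -- real part nonneg
    simp only [Complex.add_re, Complex.re_sum, Complex.zero_re]
    have hd1 : ∑ a ∈ range (M+1), ((starRingEnd ℂ) (ξ a) * A a a * ξ a).re
        = ∑ a ∈ range (M+1), (A a a).re * ‖ξ a‖^2 := by
      refine Finset.sum_congr rfl fun a _ => ?_
      rw [hdiagre]; ring
    have hS1 : ∑ a ∈ range M, ((starRingEnd ℂ) (ξ a) * A a (a+1) * ξ (a+1)).re
        ≥ ∑ a ∈ range M, -(‖ξ a‖ * ‖A a (a+1)‖ * ‖ξ (a+1)‖) :=
      Finset.sum_le_sum fun a _ => hcross a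
    have hS2 : ∑ a ∈ range M, ((starRingEnd ℂ) (ξ (a+1)) * A (a+1) a * ξ a).re
        ≥ ∑ a ∈ range M, -(‖ξ a‖ * ‖A a (a+1)‖ * ‖ξ (a+1)‖) :=
      Finset.sum_le_sum fun a _ => hcross' a
    have hS3 : ∑ a ∈ range M, 2 * (‖ξ a‖ * ‖A a (a+1)‖ * ‖ξ (a+1)‖)
        ≤ ∑ a ∈ range M, ((A a a).re * ‖ξ a‖^2 + (A (a+1) (a+1)).re * ‖ξ (a+1)‖^2) / 2 :=
      Finset.sum_le_sum fun a _ => hamgm a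
    have hterm : ∀ a : ℕ, 0 ≤ (A a a).re * ‖ξ a‖^2 := fun a =>
      mul_nonneg (hdiag a).le (sq_nonneg _)
    have hsum1 : ∑ a ∈ range M, (A a a).re * ‖ξ a‖^2
        ≤ ∑ a ∈ range (M+1), (A a a).re * ‖ξ a‖^2 := by
      rw [Finset.sum_range_succ]
      linarith [hterm M]
    have hsum2 : ∑ a ∈ range M, (A (a+1) (a+1)).re * ‖ξ (a+1)‖^2
        ≤ ∑ a ∈ range (M+1), (A a a).re * ‖ξ a‖^2 := by
      rw [Finset.sum_range_succ']
      linarith [hterm 0]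
    rw [hd1]
    have e1 : ∑ a ∈ range M, ((A a a).re * ‖ξ a‖^2 + (A (a+1) (a+1)).re * ‖ξ (a+1)‖^2) / 2
        = (∑ a ∈ range M, (A a a).re * ‖ξ a‖^2) / 2
          + (∑ a ∈ range M, (A (a+1) (a+1)).re * ‖ξ (a+1)‖^2) / 2 := by
      rw [← Finset.sum_div, Finset.sum_add_distrib]
      ring
    have e2 : ∑ a ∈ range M, -(‖ξ a‖ * ‖A a (a+1)‖ * ‖ξ (a+1)‖)
        = -(∑ a ∈ range M, (‖ξ a‖ * ‖A a (a+1)‖ * ‖ξ (a+1)‖)) := by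
      rw [Finset.sum_neg_distrib]
    have e3 : ∑ a ∈ range M, 2 * (‖ξ a‖ * ‖A a (a+1)‖ * ‖ξ (a+1)‖)
        = 2 * ∑ a ∈ range M, (‖ξ a‖ * ‖A a (a+1)‖ * ‖ξ (a+1)‖) := by
      rw [Finset.mul_sum]
    rw [e2] at hS1 hS2
    rw [e1, e3] at hS3
    linarith
  · -- imaginary part: Q = conj Q
    simp only [Complex.add_im, Complex.zero_im]
    have him : ∀ (s : Finset ℕ) (g : ℕ → ℂ), (∑ a ∈ s, g a).im = ∑ a ∈ s, (g a).im := by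
      intro s g
      exact map_sum Complex.imAddGroupHom g s
    rw [him, him, him]
    have key : ∀ a : ℕ, ((starRingEnd ℂ) (ξ a) * A a a * ξ a).im = 0 := by
      intro a
      have : (starRingEnd ℂ) (ξ a) * A a a * ξ a = ((‖ξ a‖^2 : ℝ) : ℂ) * A a a := by
        push_cast
        rw [← Complex.mul_conj']; ring
      rw [this, Complex.im_ofReal_mul]
      have : (A a a).im = 0 := by
        have := hsym a a
        have h2 := congrArg Complex.im this
        simp [Complex.conj_im] at h2
        linarith
      rw [this]; ring
    have key2 : ∀ a : ℕ, ((starRingEnd ℂ) (ξ a) * A a (a+1) * ξ (a+1)).im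
        + ((starRingEnd ℂ) (ξ (a+1)) * A (a+1) a * ξ a).im = 0 := by
      intro a
      have h := hconjterm a (a+1)
      have h2 := congrArg Complex.im h
      rw [Complex.conj_im] at h2
      linarith
    have s1 : ∑ a ∈ range (M+1), ((starRingEnd ℂ) (ξ a) * A a a * ξ a).im = 0 := by
      exact Finset.sum_eq_zero fun a _ => key a
    have s2 : ∑ a ∈ range M, ((starRingEnd ℂ) (ξ a) * A a (a+1) * ξ (a+1)).im
        + ∑ a ∈ range M, ((starRingEnd ℂ) (ξ (a+1)) * A (a+1) a * ξ a).im = 0 := by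
      rw [← Finset.sum_add_distrib]
      exact Finset.sum_eq_zero fun a _ => key2 a
    linarith
end
end

section
/- Let T be a quantum birth and death chain on B(ℓ²(ℕ₀)), and let A be an operator with domain D = span{e_n} satisfying ⟨A ξ, ξ⟩ ≥ 0 for all ξ ∈ D. Then ⟨T^n(A) ξ, ξ⟩ ≥ 0 for all ξ ∈ D and all n ∈ ℕ, where T is extended to unbounded tridiagonal-supported operators via T(A) := strong-lim_N ∑_{0≤n,m≤N} A_{n,m} T(e_{n,m}). -/
open scoped ComplexOrder
open Filter

noncomputable section

abbrev H2 : Type := lp (fun _ : ℕ => ℂ) 2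

abbrev BH : Type := H2 →L[ℂ] H2

def ee (n : ℕ) : H2 := lp.single 2 n 1

/-- matrix unit e_{n,m} : e_k ↦ δ_{m,k} e_n -/
def mU (n m : ℕ) : BH := (innerSL ℂ (ee m)).smulRight (ee n)

/-- projection onto span{e_k : n ≤ k ≤ m} -/
def pI (n m : ℕ) : BH := ∑ k ∈ Finset.Icc n m, mU k k

def IsUCP (T : BH → BH) : Prop :=
  T 1 = 1 ∧ (∀ x y : BH, T (x + y) = T x + T y) ∧
  (∀ (c : ℂ) (x : BH), T (c • x) = c • T x) ∧
  ∀ (n : ℕ) (a : Fin n → BH) (ξ : Fin n → H2),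
    0 ≤ ∑ i, ∑ j, (inner ℂ (ξ i) (T (star (a i) * a j) (ξ j)) : ℂ)

def IsQBDC (T : BH → BH) : Prop :=
  IsUCP T ∧ ∀ n m : ℕ, n ≤ m →
    (T (pI n m) - pI (n+1) (m-1)).IsPositive ∧
    (pI (n-1) (m+1) - T (pI n m)).IsPositive

def IsNormalState (φ : BH → ℂ) : Prop :=
  ∃ ξ : ℕ → H2, Summable (fun k => ‖ξ k‖ ^ 2) ∧ (∑' k, ‖ξ k‖ ^ 2) = 1 ∧
    ∀ x : BH, φ x = ∑' k, (inner ℂ (ξ k) (x (ξ k)) : ℂ)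

def InvState (T : BH → BH) (φ : BH → ℂ) : Prop := ∀ x, φ (T x) = φ x

/-- birth rate λ_n = Tr(e_{n,n} T(e_{n+1,n+1})) -/
def lamr (T : BH → BH) (n : ℕ) : ℝ := (inner ℂ (ee n) (T (mU (n+1) (n+1)) (ee n)) : ℂ).re

/-- death rate μ_n = Tr(e_{n,n} T(e_{n-1,n-1})) -/
def mur (T : BH → BH) (n : ℕ) : ℝ := (inner ℂ (ee n) (T (mU (n-1) (n-1)) (ee n)) : ℂ).re

/-- η_n = Tr(e_{n+1,n} T(e_{n,n})) -/
def etar (T : BH → BH) (n : ℕ) : ℂ := (inner ℂ (ee n) (T (mU n n) (ee (n+1))) : ℂ)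

/-- application of a QBDC to an (unbounded) operator encoded by its matrix -/
def TU (T : BH → BH) (A : ℕ → ℕ → ℂ) : ℕ → ℕ → ℂ := fun a b =>
  ∑ n ∈ Finset.Icc (a-1) (a+1), ∑ m ∈ Finset.Icc (b-1) (b+1),
    A n m * (inner ℂ (ee a) (T (mU n m) (ee b)) : ℂ)


lemma inner_ee (a b : ℕ) : (inner ℂ (ee a) (ee b) : ℂ) = if a = b then 1 else 0 := by
  rw [ee, ee, lp.inner_single_left]
  simp [lp.single_apply, eq_comm, Pi.single_apply]

lemma mU_apply (n m : ℕ) (x : H2) : mU n m x = (inner ℂ (ee m) x : ℂ) • ee n := rfl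

lemma mU_apply_ee (n m b : ℕ) : mU n m (ee b) = if m = b then ee n else 0 := by
  rw [mU_apply, inner_ee]; split <;> simp

lemma star_mU (n m : ℕ) : star (mU n m) = mU m n := by
  rw [ContinuousLinearMap.star_eq_adjoint]
  refine ((ContinuousLinearMap.eq_adjoint_iff (mU m n) (mU n m)).2 fun x y => ?_).symm
  rw [mU_apply, mU_apply, inner_smul_left, inner_smul_right, ← inner_conj_symm x (ee n)]
  ring

lemma mU_mul (n k k' m : ℕ) : mU n k * mU k' m = if k = k' then mU n m else 0 := by
  ext x
  simp only [ContinuousLinearMap.mul_apply, mU_apply, inner_smul_right, inner_ee]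
  split <;> simp [mU_apply, mul_smul]

lemma cp1 {T : BH → BH} (hT : IsUCP T) (B : BH) (ξ : H2) :
    0 ≤ (inner ℂ ξ (T (star B * B) ξ) : ℂ) := by
  have := hT.2.2.2 1 (fun _ => B) (fun _ => ξ)
  simpa using this

lemma cp2 {T : BH → BH} (hT : IsUCP T) (a b : BH) (ξ η : H2) :
    0 ≤ (inner ℂ ξ (T (star a * a) ξ) : ℂ) + (inner ℂ ξ (T (star a * b) η) : ℂ)
      + (inner ℂ η (T (star b * a) ξ) : ℂ) + (inner ℂ η (T (star b * b) η) : ℂ) := by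
  have := hT.2.2.2 2 ![a, b] ![ξ, η]
  simpa [Fin.sum_univ_two, add_assoc] using this

lemma hermit {T : BH → BH} (hT : IsUCP T) (a b : BH) (ξ η : H2) :
    (inner ℂ η (T (star b * a) ξ) : ℂ) = (starRingEnd ℂ) (inner ℂ ξ (T (star a * b) η) : ℂ) := by
  set c := (inner ℂ ξ (T (star a * b) η) : ℂ)
  set d := (inner ℂ η (T (star b * a) ξ) : ℂ)
  have h1 : (c + d).im = 0 := by
    have h0 := cp2 hT a b ξ η
    have hA := cp1 hT a ξ
    have hD := cp1 hT b η
    have := (Complex.le_def.1 h0).2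
    have hAim := (Complex.le_def.1 hA).2
    have hDim := (Complex.le_def.1 hD).2
    simp only [Complex.add_im, Complex.zero_im] at this hAim hDim ⊢
    linarith
  have h2 : (d - c).re = 0 := by
    have h0 := cp2 hT a b (Complex.I • ξ) η
    have hA := cp1 hT a (Complex.I • ξ)
    have hD := cp1 hT b η
    simp only [map_smul, inner_smul_left, inner_smul_right] at h0 hA
    have := (Complex.le_def.1 h0).2
    have hAim := (Complex.le_def.1 hA).2
    have hDim := (Complex.le_def.1 hD).2
    simp only [Complex.add_im, Complex.zero_im, Complex.mul_im, Complex.conj_im,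
      Complex.conj_re, Complex.I_re, Complex.I_im, Complex.sub_re] at this hAim hDim ⊢
    linarith
  apply Complex.ext
  · simp only [Complex.sub_re] at h2
    simp only [Complex.conj_re]
    linarith
  · simp only [Complex.add_im] at h1
    simp only [Complex.conj_im]
    linarith

lemma pI_apply_ee (n m b : ℕ) :
    pI n m (ee b) = if b ∈ Finset.Icc n m then ee b else 0 := by
  rw [pI]
  rw [ContinuousLinearMap.sum_apply]
  simp only [mU_apply_ee]
  rw [Finset.sum_ite_eq' (Finset.Icc n m) b ee]

lemma pI_nn (n : ℕ) : pI n n = mU n n := by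
  rw [pI, Finset.Icc_self, Finset.sum_singleton]

lemma mU_eq_star_mul (n m : ℕ) : mU n m = star (mU 0 n) * mU 0 m := by
  rw [star_mU, mU_mul]; simp

lemma diag_vanish {T : BH → BH} (hT : IsQBDC T) {n a : ℕ} (h : a + 1 < n ∨ n + 1 < a) :
    (inner ℂ (ee a) (T (mU n n) (ee a)) : ℂ) = 0 := by
  have hq := (hT.2 n n le_rfl).2
  have hqa : pI (n-1) (n+1) (ee a) = 0 := by
    rw [pI_apply_ee, if_neg]
    simp only [Finset.mem_Icc, not_and_or, not_le]
    rcases h with h | h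
    · left; omega
    · right; omega
  have hle := hq.inner_nonneg_right (ee a)
  rw [ContinuousLinearMap.sub_apply, hqa, zero_sub, pI_nn, inner_neg_right] at hle
  have hge : 0 ≤ (inner ℂ (ee a) (T (mU n n) (ee a)) : ℂ) := by
    rw [mU_eq_star_mul]; exact cp1 hT.1 _ _
  have him := (Complex.le_def.1 hge).2
  have hre := (Complex.le_def.1 hge).1
  simp only [Complex.zero_re, Complex.zero_im] at hre him
  apply Complex.ext <;> simp only [Complex.zero_re, Complex.zero_im]
  · have : RCLike.re (-(inner ℂ (ee a) (T (mU n n) (ee a)) : ℂ)) = -(inner ℂ (ee a) (T (mU n n) (ee a)) : ℂ).re := by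
      simp
    replace hle := (Complex.le_def.1 hle).1
    simp only [Complex.neg_re, Complex.zero_re] at hle
    linarith
  · exact him.symm

lemma vanish_left {T : BH → BH} (hT : IsUCP T) {n a : ℕ} (m b : ℕ)
    (hz : (inner ℂ (ee a) (T (mU n n) (ee a)) : ℂ) = 0) :
    (inner ℂ (ee a) (T (mU n m) (ee b)) : ℂ) = 0 := by
  set c := (inner ℂ (ee a) (T (mU n m) (ee b)) : ℂ) with hc
  by_contra hcne
  set D := (inner ℂ (ee b) (T (mU m m) (ee b)) : ℂ) with hD
  have hDpos : 0 ≤ D := by rw [hD, mU_eq_star_mul]; exact cp1 hT _ _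
  have hDre : 0 ≤ D.re := (Complex.le_def.1 hDpos).1
  have hDim : D.im = 0 := ((Complex.le_def.1 hDpos).2).symm
  set r : ℝ := (D.re + 1) / Complex.normSq c with hr
  set s : ℂ := -(r : ℂ) * c with hs
  have h0 := cp2 hT (mU 0 n) (mU 0 m) (s • ee a) (ee b)
  have hnm : star (mU 0 n) * mU 0 m = mU n m := (mU_eq_star_mul n m).symm
  have hmn : star (mU 0 m) * mU 0 n = mU m n := by rw [star_mU, mU_mul]; simp
  rw [← mU_eq_star_mul, hnm, hmn, ← mU_eq_star_mul] at h0
  simp only [map_smul, inner_smul_left, inner_smul_right] at h0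
  rw [← hc, ← hD, hz] at h0
  have hherm : (inner ℂ (ee b) (T (mU m n) (ee a)) : ℂ) = (starRingEnd ℂ) c := by
    rw [hc, ← hnm, ← hmn]
    exact hermit hT (mU 0 n) (mU 0 m) (ee a) (ee b)
  rw [hherm] at h0
  have hsc : (starRingEnd ℂ) s * c = -(r * Complex.normSq c : ℝ) := by
    rw [hs]
    simp only [map_mul, map_neg, Complex.conj_ofReal]
    have h1 : (starRingEnd ℂ) c * c = ((Complex.normSq c : ℝ) : ℂ) :=
      (Complex.normSq_eq_conj_mul_self).symm
    rw [mul_assoc, h1]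
    push_cast; ring
  have hsc' : s * (starRingEnd ℂ) c = -(r * Complex.normSq c : ℝ) := by
    rw [hs, mul_assoc, Complex.mul_conj]
    push_cast; ring
  have hrn : r * Complex.normSq c = D.re + 1 := by
    rw [hr, div_mul_cancel₀]
    exact fun h => hcne (Complex.normSq_eq_zero.1 h)
  rw [hsc, hsc', hrn] at h0
  have := (Complex.le_def.1 h0).1
  simp only [mul_zero, zero_add, Complex.add_re, Complex.neg_re, Complex.ofReal_re,
    Complex.zero_re] at this
  linarith

lemma entry_vanish {T : BH → BH} (hT : IsQBDC T) {n m a b : ℕ}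
    (h : (a + 1 < n ∨ n + 1 < a) ∨ (b + 1 < m ∨ m + 1 < b)) :
    (inner ℂ (ee a) (T (mU n m) (ee b)) : ℂ) = 0 := by
  rcases h with h | h
  · exact vanish_left hT.1 m b (diag_vanish hT h)
  · have h2 : (inner ℂ (ee b) (T (mU m n) (ee a)) : ℂ) = 0 :=
      vanish_left hT.1 n a (diag_vanish hT h)
    have hherm : (inner ℂ (ee a) (T (mU n m) (ee b)) : ℂ)
        = (starRingEnd ℂ) (inner ℂ (ee b) (T (mU m n) (ee a)) : ℂ) := by
      have e1 : star (mU 0 m) * mU 0 n = mU m n := by rw [star_mU, mU_mul]; simp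
      have e2 : star (mU 0 n) * mU 0 m = mU n m := (mU_eq_star_mul n m).symm
      rw [← e1, ← e2]
      exact hermit hT.1 (mU 0 m) (mU 0 n) (ee b) (ee a)
    rw [hherm, h2, map_zero]

lemma Qf_eq_sum (A : ℕ → ℕ → ℂ) (ξ : ℕ →₀ ℂ) (s : Finset ℕ) (h : ξ.support ⊆ s) :
    Qf A ξ = ∑ a ∈ s, ∑ b ∈ s, (starRingEnd ℂ) (ξ a) * A a b * ξ b := by
  rw [Qf]
  rw [Finset.sum_subset h]
  · apply Finset.sum_congr rfl
    intro a _
    rw [Finset.sum_subset h]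
    intro b _ hb
    rw [Finsupp.notMem_support_iff.1 hb, mul_zero]
  · intro a _ ha
    simp [Finsupp.notMem_support_iff.1 ha]

lemma QfA_real (A : ℕ → ℕ → ℂ) (hA : ∀ ξ : ℕ →₀ ℂ, 0 ≤ Qf A ξ) (ξ : ℕ →₀ ℂ) :
    (Qf A ξ).im = 0 := ((Complex.le_def.1 (hA ξ)).2).symm

lemma herm_A (A : ℕ → ℕ → ℂ) (hA : ∀ ξ : ℕ →₀ ℂ, 0 ≤ Qf A ξ) (a b : ℕ) :
    A b a = (starRingEnd ℂ) (A a b) := by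
  rcases eq_or_ne a b with rfl | hab
  · have h := hA (Finsupp.single a 1)
    have : Qf A (Finsupp.single a 1) = A a a := by
      rw [Qf_eq_sum A _ {a} Finsupp.support_single_subset]
      simp
    rw [this] at h
    have him := (Complex.le_def.1 h).2
    apply Complex.ext
    · simp [Complex.conj_re]
    · simp only [Complex.conj_im]
      simp only [Complex.zero_im] at him
      rw [← him]; ring
  · have haa : (A a a).im = 0 := by
      have h := hA (Finsupp.single a 1)
      have : Qf A (Finsupp.single a 1) = A a a := by
        rw [Qf_eq_sum A _ {a} Finsupp.support_single_subset]; simp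
      rw [this] at h
      exact ((Complex.le_def.1 h).2).symm
    have hbb : (A b b).im = 0 := by
      have h := hA (Finsupp.single b 1)
      have : Qf A (Finsupp.single b 1) = A b b := by
        rw [Qf_eq_sum A _ {b} Finsupp.support_single_subset]; simp
      rw [this] at h
      exact ((Complex.le_def.1 h).2).symm
    have key : ∀ s : ℂ, ((starRingEnd ℂ) s * s * A a a + (starRingEnd ℂ) s * A a b
        + s * A b a + A b b).im = 0 := by
      intro s
      have h := hA (Finsupp.single a s + Finsupp.single b 1)
      have hsupp : (Finsupp.single a s + Finsupp.single b 1).support ⊆ {a, b} := by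
        refine Finsupp.support_add.trans ?_
        apply Finset.union_subset
        · exact Finsupp.support_single_subset.trans (by simp)
        · exact Finsupp.support_single_subset.trans (by simp)
      have hq := Qf_eq_sum A _ ({a, b} : Finset ℕ) hsupp
      rw [Finset.sum_pair hab] at hq
      simp only [Finset.sum_pair hab, Finsupp.add_apply, Finsupp.single_apply,
        if_pos rfl, if_neg hab, if_neg (Ne.symm hab), if_true] at hq
      simp only [add_zero, zero_add] at hq
      rw [hq] at h
      have h2 := (Complex.le_def.1 h).2
      simp only [Complex.zero_im, map_one, one_mul, mul_one] at h2
      have h3 : ((starRingEnd ℂ) s * s * A a a + (starRingEnd ℂ) s * A a b + s * A b a + A b b)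
          = (starRingEnd ℂ) s * A a a * s + (starRingEnd ℂ) s * A a b + (A b a * s + A b b) := by
        ring
      rw [h3]
      exact h2.symm
    have k1 := key 1
    have k2 := key Complex.I
    simp only [map_one, one_mul, mul_one] at k1
    simp only [Complex.conj_I] at k2
    apply Complex.ext
    · simp only [Complex.conj_re]
      simp only [Complex.add_im, Complex.mul_im, Complex.mul_re, Complex.I_re,
        Complex.I_im, Complex.neg_re, Complex.neg_im] at k1 k2
      linarith
    · simp only [Complex.conj_im]
      simp only [Complex.add_im, Complex.mul_im, Complex.mul_re, Complex.I_re,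
        Complex.I_im, Complex.neg_re, Complex.neg_im] at k1
      linarith

lemma posSemidef_block (A : ℕ → ℕ → ℂ) (hA : ∀ ξ : ℕ →₀ ℂ, 0 ≤ Qf A ξ) (N : ℕ) :
    (Matrix.of fun i j : Fin N => A i j).PosSemidef := by
  rw [Matrix.posSemidef_iff_dotProduct_mulVec]
  constructor
  · ext i j
    rw [Matrix.conjTranspose_apply]
    simp only [Matrix.of_apply]
    rw [herm_A A hA (j : ℕ) (i : ℕ)]
    simp
  · intro x
    set f : ℕ → ℂ := fun k => if h : k < N then x ⟨k, h⟩ else 0 with hf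
    set ξ : ℕ →₀ ℂ := Finsupp.onFinset (Finset.range N) f
      (by intro a ha; rw [hf] at ha; simp only at ha
          by_contra h; rw [Finset.mem_range] at h; rw [dif_neg h] at ha; exact ha rfl) with hξ
    have hsupp : ξ.support ⊆ Finset.range N := Finsupp.support_onFinset_subset
    have hq := Qf_eq_sum A ξ (Finset.range N) hsupp
    have : Qf A ξ = dotProduct (star x) ((Matrix.of fun i j : Fin N => A i j).mulVec x) := by
      rw [hq]
      rw [Finset.sum_range fun a => ∑ b ∈ Finset.range N, (starRingEnd ℂ) (ξ a) * A a b * ξ b]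
      rw [dotProduct]
      apply Finset.sum_congr rfl
      intro i _
      rw [Finset.sum_range fun b => (starRingEnd ℂ) (ξ i) * A i b * ξ b]
      rw [Matrix.mulVec, dotProduct, Finset.mul_sum]
      apply Finset.sum_congr rfl
      intro j _
      have h1 : ξ (i : ℕ) = x i := by
        rw [hξ]; simp only [Finsupp.onFinset_apply, hf]; rw [dif_pos i.isLt]
      have h2 : ξ (j : ℕ) = x j := by
        rw [hξ]; simp only [Finsupp.onFinset_apply, hf]; rw [dif_pos j.isLt]
      rw [h1, h2]
      simp only [Pi.star_apply, Matrix.of_apply, RCLike.star_def]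
      ring
    rw [← this]
    exact hA ξ

lemma T_zero {T : BH → BH} (hT : IsUCP T) : T 0 = 0 := by
  have := hT.2.2.1 0 0
  simpa using this

lemma T_sum {T : BH → BH} (hT : IsUCP T) {α : Type*} (s : Finset α) (f : α → BH) :
    T (∑ i ∈ s, f i) = ∑ i ∈ s, T (f i) := by
  classical
  induction s using Finset.induction_on with
  | empty => simpa using T_zero hT
  | insert _ _ h ih =>
    rw [Finset.sum_insert h, Finset.sum_insert h, hT.2.1, ih]

lemma expand_mul (N : ℕ) (C D : Matrix (Fin N) (Fin N) ℂ) :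
    (∑ i : Fin N, ∑ j : Fin N, C i j • mU (j : ℕ) (i : ℕ))
      * (∑ k : Fin N, ∑ l : Fin N, D k l • mU (k : ℕ) (l : ℕ))
    = ∑ j : Fin N, ∑ l : Fin N, (∑ i : Fin N, C i j * D i l) • mU (j : ℕ) (l : ℕ) := by
  simp only [Finset.sum_mul, Finset.mul_sum, smul_mul_smul_comm, mU_mul, Fin.val_eq_val,
    smul_ite, smul_zero]
  have step : ∀ k l : Fin N,
      (∑ i : Fin N, ∑ j : Fin N, if i = k then (C i j * D k l) • mU (j : ℕ) (l : ℕ) else 0)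
      = ∑ j : Fin N, (C k j * D k l) • mU (j : ℕ) (l : ℕ) := by
    intro k l
    rw [Finset.sum_comm]
    apply Finset.sum_congr rfl
    intro j _
    rw [Finset.sum_ite_eq' Finset.univ k (fun i => (C i j * D k l) • mU (j : ℕ) (l : ℕ))]
    simp
  rw [Finset.sum_congr rfl fun k (_ : k ∈ Finset.univ) =>
    Finset.sum_congr rfl fun l (_ : l ∈ Finset.univ) => step k l]
  rw [Finset.sum_comm]
  rw [Finset.sum_congr rfl fun l (_ : l ∈ Finset.univ) =>
    Finset.sum_comm (s := Finset.univ) (t := Finset.univ)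
      (f := fun k j => (C k j * D k l) • mU (j : ℕ) (l : ℕ))]
  rw [Finset.sum_comm]
  apply Finset.sum_congr rfl
  intro j _
  apply Finset.sum_congr rfl
  intro l _
  rw [Finset.sum_smul]

lemma opB_mul (N : ℕ) (B : Matrix (Fin N) (Fin N) ℂ) :
    star (∑ i : Fin N, ∑ j : Fin N, B i j • mU (i : ℕ) (j : ℕ))
      * (∑ i : Fin N, ∑ j : Fin N, B i j • mU (i : ℕ) (j : ℕ))
    = ∑ j : Fin N, ∑ l : Fin N, (B.conjTranspose * B) j l • mU (j : ℕ) (l : ℕ) := by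
  have hstar : star (∑ i : Fin N, ∑ j : Fin N, B i j • mU (i : ℕ) (j : ℕ))
      = ∑ i : Fin N, ∑ j : Fin N, (starRingEnd ℂ) (B i j) • mU (j : ℕ) (i : ℕ) := by
    simp only [star_sum, star_smul, star_mU, RCLike.star_def]
  rw [hstar]
  refine (expand_mul N (fun i j => (starRingEnd ℂ) (B i j)) B).trans ?_
  apply Finset.sum_congr rfl
  intro j _
  apply Finset.sum_congr rfl
  intro l _
  congr 1

lemma TU_eq_sum_range {T : BH → BH} (hT : IsQBDC T) (A : ℕ → ℕ → ℂ) (a b N : ℕ)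
    (ha : a + 1 < N) (hb : b + 1 < N) :
    TU T A a b = ∑ n ∈ Finset.range N, ∑ m ∈ Finset.range N,
      A n m * (inner ℂ (ee a) (T (mU n m) (ee b)) : ℂ) := by
  rw [TU]
  have inner_ext : ∀ n : ℕ,
      ∑ m ∈ Finset.Icc (b-1) (b+1), A n m * (inner ℂ (ee a) (T (mU n m) (ee b)) : ℂ)
      = ∑ m ∈ Finset.range N, A n m * (inner ℂ (ee a) (T (mU n m) (ee b)) : ℂ) := by
    intro n
    apply Finset.sum_subset
    · intro m hm
      rw [Finset.mem_Icc] at hm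
      rw [Finset.mem_range]
      omega
    · intro m _ hm
      rw [Finset.mem_Icc, not_and_or, not_le, not_le] at hm
      rw [entry_vanish hT (Or.inr (by omega)), mul_zero]
  rw [Finset.sum_congr rfl fun n _ => inner_ext n]
  apply Finset.sum_subset
  · intro n hn
    rw [Finset.mem_Icc] at hn
    rw [Finset.mem_range]
    omega
  · intro n _ hn
    rw [Finset.mem_Icc, not_and_or, not_le, not_le] at hn
    apply Finset.sum_eq_zero
    intro m _
    rw [entry_vanish hT (Or.inl (by omega)), mul_zero]

lemma qbdc_step {T : BH → BH} (hT : IsQBDC T) (A : ℕ → ℕ → ℂ)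
    (hA : ∀ ξ : ℕ →₀ ℂ, 0 ≤ Qf A ξ) (ξ : ℕ →₀ ℂ) : 0 ≤ Qf (TU T A) ξ := by
  classical
  set S := ξ.support with hS
  set N : ℕ := S.sup id + 2 with hN
  have hmem : ∀ a ∈ S, a + 1 < N := by
    intro a ha
    have : a ≤ S.sup id := Finset.le_sup (f := id) ha
    omega
  set η : H2 := ∑ b ∈ S, ξ b • ee b with hη
  have hinner : ∀ n m : ℕ, (inner ℂ η (T (mU n m) η) : ℂ)
      = ∑ a ∈ S, ∑ b ∈ S, (starRingEnd ℂ) (ξ a)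
          * (inner ℂ (ee a) (T (mU n m) (ee b)) : ℂ) * ξ b := by
    intro n m
    rw [hη, map_sum, sum_inner]
    apply Finset.sum_congr rfl
    intro a _
    rw [inner_smul_left, inner_sum, Finset.mul_sum]
    apply Finset.sum_congr rfl
    intro b _
    rw [map_smul, inner_smul_right]
    ring
  have key : Qf (TU T A) ξ = ∑ i : Fin N, ∑ j : Fin N,
      A (i : ℕ) (j : ℕ) * (inner ℂ η (T (mU (i : ℕ) (j : ℕ)) η) : ℂ) := by
    set P := S ×ˢ S with hP
    set Q := Finset.range N ×ˢ Finset.range N with hQ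
    set C : ℂ := ∑ p ∈ P, ∑ q ∈ Q, (starRingEnd ℂ) (ξ p.1)
        * (A q.1 q.2 * (inner ℂ (ee p.1) (T (mU q.1 q.2) (ee p.2)) : ℂ)) * ξ p.2 with hC
    have hL : Qf (TU T A) ξ = C := by
      rw [Qf, ← Finset.sum_product']
      apply Finset.sum_congr rfl
      intro p hp
      obtain ⟨hp1, hp2⟩ := Finset.mem_product.1 hp
      rw [TU_eq_sum_range hT A p.1 p.2 N (hmem _ hp1) (hmem _ hp2)]
      rw [← Finset.sum_product', Finset.mul_sum, Finset.sum_mul]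
    have hR : (∑ i : Fin N, ∑ j : Fin N,
        A (i : ℕ) (j : ℕ) * (inner ℂ η (T (mU (i : ℕ) (j : ℕ)) η) : ℂ)) = C := by
      rw [← Finset.sum_range fun n => ∑ j : Fin N, A n (j : ℕ) * (inner ℂ η (T (mU n (j : ℕ)) η) : ℂ)]
      rw [Finset.sum_congr rfl fun n (_ : n ∈ Finset.range N) =>
        (Finset.sum_range fun m => A n m * (inner ℂ η (T (mU n m) η) : ℂ)).symm]
      rw [← Finset.sum_product']
      rw [hC, Finset.sum_comm]
      apply Finset.sum_congr rfl
      intro q _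
      rw [hinner]
      simp only [Finset.mul_sum]
      rw [← Finset.sum_product']
      apply Finset.sum_congr rfl
      intro p _
      ring
    rw [hL, hR]
  obtain ⟨B, hB⟩ : ∃ B : Matrix (Fin N) (Fin N) ℂ,
      Matrix.of (fun i j : Fin N => A i j) = B.conjTranspose * B := by
    open MatrixOrder Matrix.Norms.L2Operator in
    obtain ⟨B, hB⟩ := CStarAlgebra.nonneg_iff_eq_star_mul_self.mp (posSemidef_block A hA N).nonneg
    exact ⟨B, hB⟩
  set opB : BH := ∑ i : Fin N, ∑ j : Fin N, B i j • mU (i : ℕ) (j : ℕ) with hopB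
  have hprod : star opB * opB
      = ∑ i : Fin N, ∑ j : Fin N, A (i : ℕ) (j : ℕ) • mU (i : ℕ) (j : ℕ) := by
    rw [hopB, opB_mul, ← hB]
    rfl
  have hpos := cp1 hT.1 opB η
  rw [hprod] at hpos
  have hTsum : T (∑ i : Fin N, ∑ j : Fin N, A (i : ℕ) (j : ℕ) • mU (i : ℕ) (j : ℕ))
      = ∑ i : Fin N, ∑ j : Fin N, A (i : ℕ) (j : ℕ) • T (mU (i : ℕ) (j : ℕ)) := by
    rw [T_sum hT.1]
    apply Finset.sum_congr rfl
    intro i _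
    rw [T_sum hT.1]
    apply Finset.sum_congr rfl
    intro j _
    exact hT.1.2.2.1 _ _
  rw [hTsum] at hpos
  simp only [ContinuousLinearMap.sum_apply, ContinuousLinearMap.smul_apply, inner_sum,
    inner_smul_right] at hpos
  rw [key]
  exact hpos

/-- **A QBDC preserves positivity of quadratic forms of (unbounded) operators
with domain D = span{e_n}.** Here `TU T` is the extension of `T` to operators
encoded by their matrices, via `T(A) = strong-lim_N ∑_{n,m ≤ N} A_{n,m} T(e_{n,m})`
(the strong limit is locally a finite sum, by the nearest-neighbour property of a QBDC). -/
theorem qbdc_preserves_positive_forms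
    (T : BH → BH) (hT : IsQBDC T)
    (A : ℕ → ℕ → ℂ) (hA : ∀ ξ : ℕ →₀ ℂ, 0 ≤ Qf A ξ) :
    ∀ (n : ℕ) (ξ : ℕ →₀ ℂ), 0 ≤ Qf ((TU T)^[n] A) ξ := by
  intro n
  induction n with
  | zero =>
    intro ξ
    simpa using hA ξ
  | succ k ih =>
    intro ξ
    rw [Function.iterate_succ_apply']
    exact qbdc_step hT _ ih ξ

end
end
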